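/- Reduction of the limit control problem to a finite-dimensional problem: let a_1,…,a_σ > 0 with a_1+…+a_σ = 1, A_0 = 0, A_i = a_1+…+a_i, let r̃(t) = log(s_i − 1) for A_{i−1} ≤ t < A_i, and let c ∈ (0,1). Then the supremum, over all measurable functions θ : [0,1] → [0,1] with ∫_0^1 θ(t) dt ≤ c, of ∫_0^1 [ r̃(t)θ(t) + H(θ(t)) ] dt equals the supremum of ∑_{i=1}^σ a_i ( θ_i log(s_i − 1) + H(θ_i) ) over all vectors (θ_1,…,θ_σ) ∈ [0,1]^σ with ∑_{i=1}^σ a_i θ_i ≤ c. -/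

import Mathlib

open Finset MeasureTheory

section
variable {σ : ℕ} (a : Fin σ → ℝ)

noncomputable def Tpart (n : ℕ) : ℝ :=
  ∑ k ∈ Finset.univ.filter (fun k : Fin σ => (k : ℕ) < n), a k

variable (ha : ∀ i, 0 < a i) (hsum : ∑ i, a i = 1)

lemma Tpart_zero : Tpart a 0 = 0 := by simp [Tpart]

include hsum in
lemma Tpart_last : Tpart a σ = 1 := by
  rw [← hsum]; unfold Tpart; congr 1; ext k; simp [k.isLt]

lemma Tpart_succ (i : Fin σ) : Tpart a (i + 1) = Tpart a i + a i := by
  unfold Tpart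
  have h : Finset.univ.filter (fun k : Fin σ => (k : ℕ) < i + 1)
      = insert i (Finset.univ.filter (fun k : Fin σ => (k : ℕ) < i)) := by
    ext k; simp [Fin.ext_iff]; omega
  rw [h, Finset.sum_insert (by simp), add_comm]

include ha in
lemma Tpart_mono : Monotone (Tpart a) := by
  intro m n hmn
  apply Finset.sum_le_sum_of_subset_of_nonneg
  · intro k; simp only [Finset.mem_filter, Finset.mem_univ, true_and]; omega
  · exact fun k _ _ => (ha k).le

include ha in
lemma Tpart_nonneg (n : ℕ) : 0 ≤ Tpart a n := by
  simpa [Tpart_zero] using Tpart_mono a ha (Nat.zero_le n)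

include ha hsum in
lemma Tpart_le_one (n : ℕ) : Tpart a n ≤ 1 := by
  rw [← hsum]
  exact Finset.sum_le_sum_of_subset_of_nonneg (Finset.filter_subset _ _) fun k _ _ => (ha k).le

include ha hsum in
lemma Tpart_cover {t : ℝ} (h0 : 0 ≤ t) (h1 : t < 1) (hσ : 1 ≤ σ) :
    ∃ j : Fin σ, t ∈ Set.Ico (Tpart a j) (Tpart a (j + 1)) := by
  have hex : ∃ n, t < Tpart a (n + 1) := ⟨σ - 1, by
    have : σ - 1 + 1 = σ := by omega
    rw [this, Tpart_last a hsum]; exact h1⟩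
  classical
  let n0 := Nat.find hex
  have hn0 : t < Tpart a (n0 + 1) := Nat.find_spec hex
  have hn0σ : n0 < σ := by
    have : n0 ≤ σ - 1 := Nat.find_min' hex (by
      have h' : σ - 1 + 1 = σ := by omega
      rw [h', Tpart_last a hsum]; exact h1)
    omega
  refine ⟨⟨n0, hn0σ⟩, ?_, hn0⟩
  rcases Nat.eq_zero_or_pos n0 with h | h
  · simp only [h, Tpart_zero]; exact h0
  · have := Nat.find_min hex (m := n0 - 1) (by omega)
    push_neg at this
    have hh : n0 - 1 + 1 = n0 := by omega
    rwa [hh] at this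
end

noncomputable def Hent (θ : ℝ) : ℝ := -θ * Real.log θ - (1 - θ) * Real.log (1 - θ)

lemma Hent_eq : Hent = Real.binEntropy := by
  ext p; simp [Hent, Real.binEntropy, Real.log_inv]; ring

lemma Hent_cont : Continuous Hent := Hent_eq ▸ Real.binEntropy_continuous
lemma Hent_concave : ConcaveOn ℝ (Set.Icc 0 1) Hent :=
  Hent_eq ▸ Real.strictConcave_binEntropy.concaveOn
lemma Hent_nonneg {p : ℝ} (h : p ∈ Set.Icc (0:ℝ) 1) : 0 ≤ Hent p :=
  Hent_eq ▸ Real.binEntropy_nonneg h.1 h.2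
lemma Hent_le : ∀ p : ℝ, Hent p ≤ Real.log 2 := fun p => Hent_eq ▸ Real.binEntropy_le_log_two


theorem limit_control_problem_reduction
    (σ : ℕ) (hσ : 1 ≤ σ) (s : Fin σ → ℕ) (hs : ∀ i, 2 ≤ s i)
    (a : Fin σ → ℝ) (ha : ∀ i, 0 < a i) (hsum : ∑ i, a i = 1)
    (rt : ℝ → ℝ)
    (hrt : ∀ i : Fin σ, ∀ t : ℝ,
      (∑ k ∈ univ.filter (fun k => k < i), a k) ≤ t →
      t < (∑ k ∈ univ.filter (fun k => k < i), a k) + a i →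
      rt t = Real.log ((s i : ℝ) - 1))
    (c : ℝ) (hc : c ∈ Set.Ioo (0 : ℝ) 1) :
    sSup {v : ℝ | ∃ θ : ℝ → ℝ, Measurable θ ∧
        (∀ t ∈ Set.Icc (0 : ℝ) 1, θ t ∈ Set.Icc (0 : ℝ) 1) ∧
        (∫ t in (0 : ℝ)..1, θ t) ≤ c ∧
        v = ∫ t in (0 : ℝ)..1, (rt t * θ t + Hent (θ t))}
    = sSup {v : ℝ | ∃ θ : Fin σ → ℝ, (∀ i, θ i ∈ Set.Icc (0 : ℝ) 1) ∧
        (∑ i, a i * θ i) ≤ c ∧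
        v = ∑ i, a i * (θ i * Real.log ((s i : ℝ) - 1) + Hent (θ i))} := by
  classical
  set S1 := {v : ℝ | ∃ θ : ℝ → ℝ, Measurable θ ∧
        (∀ t ∈ Set.Icc (0 : ℝ) 1, θ t ∈ Set.Icc (0 : ℝ) 1) ∧
        (∫ t in (0 : ℝ)..1, θ t) ≤ c ∧
        v = ∫ t in (0 : ℝ)..1, (rt t * θ t + Hent (θ t))} with hS1
  set S2 := {v : ℝ | ∃ θ : Fin σ → ℝ, (∀ i, θ i ∈ Set.Icc (0 : ℝ) 1) ∧
        (∑ i, a i * θ i) ≤ c ∧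
        v = ∑ i, a i * (θ i * Real.log ((s i : ℝ) - 1) + Hent (θ i))} with hS2
  set T := Tpart a with hT
  -- basic facts about T
  have hT0 : T 0 = 0 := Tpart_zero a
  have hTσ : T σ = 1 := Tpart_last a hsum
  have hTmono : Monotone T := Tpart_mono a ha
  have hTnn : ∀ n, 0 ≤ T n := Tpart_nonneg a ha
  have hTle1 : ∀ n, T n ≤ 1 := Tpart_le_one a ha hsum
  have hTsucc : ∀ i : Fin σ, T (i + 1) = T i + a i := Tpart_succ a
  have hstep : ∀ n, n < σ → T n ≤ T (n+1) := fun n _ => hTmono (Nat.le_succ n)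
  -- rt on pieces
  have hr0 : ∀ i : Fin σ, (0:ℝ) ≤ Real.log ((s i : ℝ) - 1) := by
    intro i
    apply Real.log_nonneg
    have := hs i
    have : (2:ℝ) ≤ (s i : ℝ) := by exact_mod_cast this
    linarith
  have hrt' : ∀ i : Fin σ, ∀ t ∈ Set.Ico (T i) (T (i + 1)), rt t = Real.log ((s i : ℝ) - 1) := by
    intro i t ht
    have heq : (∑ k ∈ univ.filter (fun k => k < i), a k) = T i := by
      rfl
    exact hrt i t (heq ▸ ht.1) (by rw [heq]; rw [hTsucc i] at ht; exact ht.2)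
  -- a.e. equality of rt with constant on each piece
  have hae : ∀ i : Fin σ, ∀ᵐ t ∂(volume.restrict (Set.Ioc (T i) (T (i+1)))),
      rt t = Real.log ((s i : ℝ) - 1) := by
    intro i
    have hne : ∀ᵐ t : ℝ, t ≠ T (i+1) := by
      refine ae_iff.2 ?_
      simp only [not_not, Set.setOf_eq_eq_singleton]
      exact Real.volume_singleton
    filter_upwards [ae_restrict_mem measurableSet_Ioc, ae_restrict_of_ae hne] with t ht htne
    exact hrt' i t ⟨le_of_lt ht.1, lt_of_le_of_ne ht.2 htne⟩
  -- helper: a.e. avoid a point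
  have hptne : ∀ b : ℝ, ∀ᵐ t : ℝ, t ≠ b := by
    intro b
    refine ae_iff.2 ?_
    simp only [not_not, Set.setOf_eq_eq_singleton]
    exact Real.volume_singleton
  -- helper: integral of an a.e.-constant function over a piece
  have hconst : ∀ (i : Fin σ) (g : ℝ → ℝ) (C : ℝ),
      (∀ t ∈ Set.Ico (T i) (T (i + 1)), g t = C) →
      IntervalIntegrable g volume (T i) (T (i + 1)) ∧
        ∫ t in (T i : ℝ)..(T (i + 1) : ℝ), g t = a i * C := by
    intro i g C hgC
    have hle : T i ≤ T (i + 1) := hstep i i.isLt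
    have haeg : g =ᵐ[volume.restrict (Set.Ioc (T i) (T (i + 1)))] fun _ => C := by
      filter_upwards [ae_restrict_mem measurableSet_Ioc, ae_restrict_of_ae (hptne (T (i + 1)))]
        with t ht htne
      exact hgC t ⟨ht.1.le, lt_of_le_of_ne ht.2 htne⟩
    have hvol : volume (Set.Ioc (T i) (T (i + 1))) = ENNReal.ofReal (a i) := by
      rw [Real.volume_Ioc]; congr 1; rw [hTsucc i]; ring
    have hint : IntegrableOn g (Set.Ioc (T i) (T (i + 1))) volume := by
      refine Integrable.congr ?_ haeg.symm
      exact integrableOn_const (by rw [hvol]; exact ENNReal.ofReal_ne_top)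
    constructor
    · exact (intervalIntegrable_iff_integrableOn_Ioc_of_le hle).2 hint
    · rw [intervalIntegral.integral_of_le hle, integral_congr_ae haeg, setIntegral_const,
        measureReal_def, hvol, ENNReal.toReal_ofReal (ha i).le, smul_eq_mul]
  -- helper: splitting the integral over the partition
  have hsplit : ∀ g : ℝ → ℝ,
      (∀ k : Fin σ, IntervalIntegrable g volume (T k) (T (k + 1))) →
      ∫ t in (0 : ℝ)..1, g t = ∑ i : Fin σ, ∫ t in (T i : ℝ)..(T (i + 1) : ℝ), g t := by
    intro g hg
    rw [Fin.sum_univ_eq_sum_range (fun k => ∫ t in (T k : ℝ)..(T (k + 1) : ℝ), g t) σ,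
      intervalIntegral.sum_integral_adjacent_intervals (fun k hk => hg ⟨k, hk⟩), hT0, hTσ]
  -- Direction 1 : S2 ⊆ S1
  have hsub : S2 ⊆ S1 := by
    rintro v ⟨φ, hφmem, hφc, rfl⟩
    set θ : ℝ → ℝ :=
      fun t => ∑ i : Fin σ, (Set.Ico (T i) (T (i + 1))).indicator (fun _ => φ i) t with hθdef
    have hθmeas : Measurable θ := by
      apply Finset.measurable_sum
      intro i _
      exact measurable_const.indicator measurableSet_Ico
    have hθval : ∀ j : Fin σ, ∀ t ∈ Set.Ico (T j) (T (j + 1)), θ t = φ j := by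
      intro j t ht
      show (∑ i : Fin σ, (Set.Ico (T i) (T (i + 1))).indicator (fun _ => φ i) t) = φ j
      rw [Finset.sum_eq_single j]
      · rw [Set.indicator_of_mem ht]
      · intro i _ hij
        apply Set.indicator_of_notMem
        intro hti
        rcases lt_or_gt_of_ne (fun h : (i : ℕ) = (j : ℕ) => hij (Fin.ext h)) with h | h
        · have : T (i + 1) ≤ T j := hTmono h
          exact absurd hti.2 (not_lt.2 (this.trans ht.1))
        · have : T (j + 1) ≤ T i := hTmono h
          exact absurd ht.2 (not_lt.2 (this.trans hti.1))
      · simp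
    have hθrange : ∀ t ∈ Set.Icc (0 : ℝ) 1, θ t ∈ Set.Icc (0 : ℝ) 1 := by
      intro t ht
      rcases lt_or_eq_of_le ht.2 with h1 | h1
      · obtain ⟨j, hj⟩ := Tpart_cover a ha hsum ht.1 h1 hσ
        rw [hθval j t hj]
        exact hφmem j
      · have : θ t = 0 := by
          rw [hθdef]
          apply Finset.sum_eq_zero
          intro i _
          apply Set.indicator_of_notMem
          intro hti
          exact absurd (hti.2.trans_le (hTle1 _)) (by rw [h1]; exact lt_irrefl 1)
        rw [this]; exact ⟨le_refl 0, zero_le_one⟩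
    have hpiece1 := fun i : Fin σ => hconst i θ (φ i) (hθval i)
    have hpiece2 := fun i : Fin σ =>
      hconst i (fun t => rt t * θ t + Hent (θ t))
        (Real.log ((s i : ℝ) - 1) * φ i + Hent (φ i))
        (fun t ht => by
          show rt t * θ t + Hent (θ t) = _
          rw [hrt' i t ht, hθval i t ht])
    refine ⟨θ, hθmeas, hθrange, ?_, ?_⟩
    · rw [hsplit θ fun i => (hpiece1 i).1]
      calc ∑ i : Fin σ, ∫ t in (T i : ℝ)..(T (i + 1) : ℝ), θ t
          = ∑ i, a i * φ i := Finset.sum_congr rfl fun i _ => (hpiece1 i).2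
        _ ≤ c := hφc
    · rw [hsplit _ fun i => (hpiece2 i).1]
      refine Finset.sum_congr rfl fun i _ => ?_
      rw [(hpiece2 i).2]; ring
  -- Direction 2 : every v in S1 is ≤ some w in S2
  have hdom : ∀ v ∈ S1, ∃ w ∈ S2, v ≤ w := by
    rintro v ⟨θ, hθmeas, hθmem, hθc, rfl⟩
    have hsub01 : ∀ i : Fin σ, Set.Ioc (T i) (T (i + 1)) ⊆ Set.Icc (0 : ℝ) 1 := by
      intro i t ht; exact ⟨(hTnn _).trans ht.1.le, ht.2.trans (hTle1 _)⟩
    have hle : ∀ i : Fin σ, T i ≤ T (i + 1) := fun i => hstep i i.isLt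
    have hvol : ∀ i : Fin σ, volume (Set.Ioc (T i) (T (i + 1))) = ENNReal.ofReal (a i) := by
      intro i; rw [Real.volume_Ioc]; congr 1; rw [hTsucc i]; ring
    have hθint : ∀ i : Fin σ, IntegrableOn θ (Set.Ioc (T i) (T (i + 1))) volume := by
      intro i
      apply Measure.integrableOn_of_bounded (M := 1)
        (by rw [hvol i]; exact ENNReal.ofReal_ne_top) hθmeas.aestronglyMeasurable
      filter_upwards [ae_restrict_mem measurableSet_Ioc] with t ht
      have h := hθmem t (hsub01 i ht)
      rw [Real.norm_eq_abs, abs_le]; exact ⟨by linarith [h.1], h.2⟩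
    have hθii : ∀ i : Fin σ, IntervalIntegrable θ volume (T i) (T (i + 1)) :=
      fun i => (intervalIntegrable_iff_integrableOn_Ioc_of_le (hle i)).2 (hθint i)
    set φ : Fin σ → ℝ := fun i => (a i)⁻¹ * ∫ t in Set.Ioc (T i) (T (i + 1)), θ t with hφdef
    have hφint : ∀ i : Fin σ, ∫ t in Set.Ioc (T i) (T (i + 1)), θ t = a i * φ i := by
      intro i; rw [hφdef]
      show _ = a i * ((a i)⁻¹ * _)
      rw [← mul_assoc, mul_inv_cancel₀ (ha i).ne', one_mul]
    have hInn : ∀ i : Fin σ, 0 ≤ ∫ t in Set.Ioc (T i) (T (i + 1)), θ t := by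
      intro i
      apply setIntegral_nonneg measurableSet_Ioc
      intro t ht; exact (hθmem t (hsub01 i ht)).1
    have hIub : ∀ i : Fin σ, ∫ t in Set.Ioc (T i) (T (i + 1)), θ t ≤ a i := by
      intro i
      have h1 : ∫ t in Set.Ioc (T i) (T (i + 1)), θ t
          ≤ ∫ _ in Set.Ioc (T i) (T (i + 1)), (1 : ℝ) := by
        apply setIntegral_mono_on (hθint i)
          (integrableOn_const (by rw [hvol i]; exact ENNReal.ofReal_ne_top))
          measurableSet_Ioc
        intro t ht; exact (hθmem t (hsub01 i ht)).2
      rw [setIntegral_const, measureReal_def, hvol i, ENNReal.toReal_ofReal (ha i).le, smul_eq_mul, mul_one] at h1; exact h1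
    have hφmem : ∀ i, φ i ∈ Set.Icc (0 : ℝ) 1 := by
      intro i
      constructor
      · exact mul_nonneg (inv_nonneg.2 (ha i).le) (hInn i)
      · rw [hφdef]
        exact (inv_mul_le_iff₀ (ha i)).2 (by simpa using hIub i)
    have hHm : Measurable fun t => Hent (θ t) := Hent_cont.measurable.comp hθmeas
    have hHint : ∀ i : Fin σ, IntegrableOn (fun t => Hent (θ t))
        (Set.Ioc (T i) (T (i + 1))) volume := by
      intro i
      apply Measure.integrableOn_of_bounded (M := Real.log 2)
        (by rw [hvol i]; exact ENNReal.ofReal_ne_top) hHm.aestronglyMeasurable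
      filter_upwards [ae_restrict_mem measurableSet_Ioc] with t ht
      have hmem := hθmem t (hsub01 i ht)
      rw [Real.norm_eq_abs, abs_le]
      have h2 : (0:ℝ) ≤ Real.log 2 := Real.log_nonneg one_le_two
      exact ⟨by linarith [Hent_nonneg hmem], Hent_le _⟩
    have haeeq : ∀ i : Fin σ, (fun t => rt t * θ t + Hent (θ t))
        =ᵐ[volume.restrict (Set.Ioc (T i) (T (i + 1)))]
        fun t => Real.log ((s i : ℝ) - 1) * θ t + Hent (θ t) := by
      intro i; filter_upwards [hae i] with t ht; rw [ht]
    have hgint : ∀ i : Fin σ, IntegrableOn (fun t => rt t * θ t + Hent (θ t))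
        (Set.Ioc (T i) (T (i + 1))) volume := by
      intro i
      refine Integrable.congr ?_ (haeeq i).symm
      exact ((hθint i).const_mul _).add (hHint i)
    have hgii : ∀ i : Fin σ, IntervalIntegrable (fun t => rt t * θ t + Hent (θ t))
        volume (T i) (T (i + 1)) :=
      fun i => (intervalIntegrable_iff_integrableOn_Ioc_of_le (hle i)).2 (hgint i)
    -- Jensen on each piece
    have hJ : ∀ i : Fin σ, ∫ t in Set.Ioc (T i) (T (i + 1)), Hent (θ t)
        ≤ a i * Hent (φ i) := by
      intro i
      have h0 : volume (Set.Ioc (T i) (T (i + 1))) ≠ 0 := by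
        rw [hvol i]; simp [ENNReal.ofReal_eq_zero, not_le, ha i]
      have hnetop : volume (Set.Ioc (T i) (T (i + 1))) ≠ ⊤ := by
        rw [hvol i]; exact ENNReal.ofReal_ne_top
      have hfs : ∀ᵐ x ∂(volume.restrict (Set.Ioc (T i) (T (i + 1)))), θ x ∈ Set.Icc (0:ℝ) 1 := by
        filter_upwards [ae_restrict_mem measurableSet_Ioc] with t ht
        exact hθmem t (hsub01 i ht)
      have hjen := Hent_concave.le_map_set_average Hent_cont.continuousOn isClosed_Icc
        h0 hnetop hfs (hθint i) (hHint i)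
      rw [setAverage_eq, setAverage_eq, measureReal_def, hvol i, ENNReal.toReal_ofReal (ha i).le,
        smul_eq_mul, smul_eq_mul] at hjen
      have h2 : (a i)⁻¹ * ∫ t in Set.Ioc (T i) (T (i + 1)), θ t = φ i := rfl
      rw [h2] at hjen
      have := mul_le_mul_of_nonneg_left hjen (ha i).le
      calc ∫ t in Set.Ioc (T i) (T (i + 1)), Hent (θ t)
          = a i * ((a i)⁻¹ * ∫ t in Set.Ioc (T i) (T (i + 1)), Hent (θ t)) := by
            rw [← mul_assoc, mul_inv_cancel₀ (ha i).ne', one_mul]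
        _ ≤ a i * Hent (φ i) := this
    -- per-piece value bound
    have hval : ∀ i : Fin σ, ∫ t in (T i : ℝ)..(T (i + 1) : ℝ), (rt t * θ t + Hent (θ t))
        ≤ a i * (φ i * Real.log ((s i : ℝ) - 1) + Hent (φ i)) := by
      intro i
      rw [intervalIntegral.integral_of_le (hle i), integral_congr_ae (haeeq i),
        integral_add ((hθint i).const_mul _) (hHint i), integral_const_mul, hφint i]
      nlinarith [hJ i]
    refine ⟨∑ i, a i * (φ i * Real.log ((s i : ℝ) - 1) + Hent (φ i)),
      ⟨φ, hφmem, ?_, rfl⟩, ?_⟩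
    · calc ∑ i, a i * φ i = ∑ i : Fin σ, ∫ t in Set.Ioc (T i) (T (i + 1)), θ t :=
            Finset.sum_congr rfl fun i _ => (hφint i).symm
        _ = ∑ i : Fin σ, ∫ t in (T i : ℝ)..(T (i + 1) : ℝ), θ t :=
            Finset.sum_congr rfl fun i _ => (intervalIntegral.integral_of_le (hle i)).symm
        _ = ∫ t in (0:ℝ)..1, θ t := (hsplit θ hθii).symm
        _ ≤ c := hθc
    · rw [hsplit _ hgii]
      exact Finset.sum_le_sum fun i _ => hval i
  -- bounds
  have hS2bdd : BddAbove S2 := by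
    refine ⟨∑ i, a i * (Real.log ((s i : ℝ) - 1) + Real.log 2), ?_⟩
    rintro v ⟨θ, hθmem, -, rfl⟩
    apply Finset.sum_le_sum
    intro i _
    have h1 := (hθmem i).1
    have h2 := (hθmem i).2
    have hri := hr0 i
    have key : θ i * Real.log ((s i : ℝ) - 1) + Hent (θ i)
        ≤ Real.log ((s i : ℝ) - 1) + Real.log 2 := by
      have h3 : θ i * Real.log ((s i : ℝ) - 1) ≤ Real.log ((s i : ℝ) - 1) := by nlinarith
      linarith [Hent_le (θ i)]
    exact mul_le_mul_of_nonneg_left key (ha i).le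
  have hS2ne : S2.Nonempty := by
    refine ⟨0, fun _ => 0, fun i => ⟨le_refl 0, zero_le_one⟩, by simpa using hc.1.le, by simp [Hent]⟩
  have hS1bdd : BddAbove S1 := by
    obtain ⟨M, hM⟩ := hS2bdd
    refine ⟨M, fun v hv => ?_⟩
    obtain ⟨w, hw, hvw⟩ := hdom v hv
    exact hvw.trans (hM hw)
  apply le_antisymm
  · apply csSup_le (hS2ne.mono hsub)
    intro v hv
    obtain ⟨w, hw, hvw⟩ := hdom v hv
    exact hvw.trans (le_csSup hS2bdd hw)
  · exact csSup_le_csSup hS1bdd hS2ne hsub
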